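/- arXiv:2602.07638 — 2 statements merged into one kernel-verified Lean document; each statement's English description precedes it below -/
import Mathlib

section
/- For every integer n ≥ 3, the sum over 1 ≤ i < j ≤ n-1 of (cos(2πi/n) - cos(2πj/n))² equals n(n-3)/2. -/
open Real Finset

lemma sum_exp_aux (n m : ℕ) (hn : 0 < n) (h : ¬ n ∣ m) :
    ∑ k ∈ Finset.range n, Complex.exp (2 * π * Complex.I * m * k / n) = 0 := by
  have hn' : (n : ℂ) ≠ 0 := Nat.cast_ne_zero.mpr hn.ne'
  set ζ : ℂ := Complex.exp (2 * π * Complex.I * m / n) with hζdef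
  have hpow : ∀ k : ℕ, Complex.exp (2 * π * Complex.I * m * k / n) = ζ ^ k := by
    intro k
    rw [hζdef, ← Complex.exp_nat_mul]
    ring_nf
  have hζ1 : ζ ≠ 1 := by
    intro h1
    rw [hζdef, Complex.exp_eq_one_iff] at h1
    obtain ⟨j, hj⟩ := h1
    have hI : (Complex.I : ℂ) ≠ 0 := Complex.I_ne_zero
    have hpi : (π : ℂ) ≠ 0 := Complex.ofReal_ne_zero.mpr Real.pi_ne_zero
    have : (m : ℂ) = j * n := by
      field_simp at hj
      have h2 : (2 : ℂ) ≠ 0 := two_ne_zero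
      -- hj : 2 * π * I * m = j * (2 * π * I) * n  (roughly)
      apply mul_left_cancel₀ (mul_ne_zero (mul_ne_zero h2 hpi) hI)
      ring_nf
      ring_nf at hj
      linear_combination (2 * (π : ℂ) * Complex.I) * hj
    have hz : (m : ℤ) = j * n := by exact_mod_cast this
    have hd : (n : ℤ) ∣ (m : ℤ) := ⟨j, by rw [hz]; ring⟩
    exact h (by exact_mod_cast hd)
  have hζn : ζ ^ n = 1 := by
    rw [hζdef, ← Complex.exp_nat_mul]
    have : (n : ℂ) * (2 * ↑π * Complex.I * ↑m / ↑n) = (m : ℂ) * (2 * ↑π * Complex.I) := by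
      field_simp
    rw [this, Complex.exp_nat_mul_two_pi_mul_I]
  simp_rw [hpow]
  rw [geom_sum_eq hζ1, hζn, sub_self, zero_div]

lemma sum_cos_aux (n m : ℕ) (hn : 0 < n) (h : ¬ n ∣ m) :
    ∑ k ∈ Finset.range n, Real.cos (2 * π * m * k / n) = 0 := by
  have := sum_exp_aux n m hn h
  have hre : ∀ k : ℕ, Real.cos (2 * π * m * k / n)
      = (Complex.exp (2 * π * Complex.I * m * k / n)).re := by
    intro k
    have : (2 * π * Complex.I * m * k / n : ℂ)
        = ((2 * π * m * k / n : ℝ) : ℂ) * Complex.I := by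
      push_cast; ring
    rw [this, Complex.exp_ofReal_mul_I_re]
  simp_rw [hre, ← Complex.re_sum, this, Complex.zero_re]

theorem quadratic_energy_at_cosine_points (n : ℕ) (hn : 3 ≤ n) :
    ∑ i ∈ Finset.Ico 1 n, ∑ j ∈ Finset.Ico (i + 1) n,
      (Real.cos (2 * π * i / n) - Real.cos (2 * π * j / n)) ^ 2
    = n * (n - 3) / 2 := by
  have hn0 : 0 < n := by omega
  set x : ℕ → ℝ := fun k => Real.cos (2 * π * k / n) with hx
  -- Sum of x over Ico 1 n
  have h1 : ∑ k ∈ Finset.Ico 1 n, x k = -1 := by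
    have h0 := sum_cos_aux n 1 hn0 (fun hd => by simp [Nat.dvd_one] at hd; omega)
    simp only [Nat.cast_one, mul_one] at h0
    rw [Finset.range_eq_Ico, Finset.sum_eq_sum_Ico_succ_bot hn0] at h0
    simp only [Nat.cast_zero, mul_zero, zero_div, Real.cos_zero] at h0
    have : ∑ k ∈ Finset.Ico 1 n, x k
        = ∑ k ∈ Finset.Ico 1 n, Real.cos (2 * π * k / n) := by
      apply Finset.sum_congr rfl; intro k _; rw [hx]
    rw [this]; linarith
  -- Sum of x^2 over Ico 1 n
  have h2 : ∑ k ∈ Finset.Ico 1 n, (x k) ^ 2 = ((n : ℝ) - 2) / 2 := by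
    have h0 : ∑ k ∈ Finset.range n, Real.cos (2 * π * 2 * k / n) = 0 :=
      sum_cos_aux n 2 hn0 (fun hd => by have := Nat.le_of_dvd (by norm_num) hd; omega)
    rw [Finset.range_eq_Ico, Finset.sum_eq_sum_Ico_succ_bot hn0] at h0
    simp only [Nat.cast_zero, mul_zero, zero_div, Real.cos_zero] at h0
    have hsq : ∀ k : ℕ, (x k) ^ 2 = 1 / 2 + Real.cos (2 * π * 2 * k / n) / 2 := by
      intro k
      rw [hx]
      have := Real.cos_sq (2 * π * k / n)
      rw [this]
      ring_nf
    simp_rw [hsq]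
    have hcard : ((n - 1 : ℕ) : ℝ) = (n : ℝ) - 1 := by
      push_cast [Nat.cast_sub (by omega : 1 ≤ n)]; ring
    rw [Finset.sum_add_distrib, Finset.sum_const, Nat.card_Ico, nsmul_eq_mul, hcard,
      ← Finset.sum_div]
    have : ∑ k ∈ Finset.Ico 1 n, Real.cos (2 * π * 2 * ↑k / ↑n) = -1 := by linarith
    rw [this]
    ring
  -- symmetric expansion
  set f : ℕ → ℕ → ℝ := fun i j => (x i - x j) ^ 2 with hf
  have hfsymm : ∀ i j, f i j = f j i := by intro i j; rw [hf]; ring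
  have hfull : ∑ i ∈ Finset.Ico 1 n, ∑ j ∈ Finset.Ico 1 n, f i j
      = 2 * ∑ i ∈ Finset.Ico 1 n, ∑ j ∈ Finset.Ico (i + 1) n, f i j := by
    have split : ∀ i ∈ Finset.Ico 1 n, ∑ j ∈ Finset.Ico 1 n, f i j
        = (∑ j ∈ Finset.Ico 1 i, f i j) + f i i + ∑ j ∈ Finset.Ico (i + 1) n, f i j := by
      intro i hi
      rw [Finset.mem_Ico] at hi
      rw [← Finset.sum_Ico_consecutive _ hi.1 (le_of_lt hi.2),
        Finset.sum_eq_sum_Ico_succ_bot hi.2]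
      ring
    rw [Finset.sum_congr rfl split]
    have hdiag : ∀ i, f i i = 0 := by intro i; rw [hf]; simp
    simp_rw [hdiag, add_zero, Finset.sum_add_distrib]
    have hswap : ∑ i ∈ Finset.Ico 1 n, ∑ j ∈ Finset.Ico 1 i, f i j
        = ∑ i ∈ Finset.Ico 1 n, ∑ j ∈ Finset.Ico (i + 1) n, f i j := by
      have hs : ∑ i ∈ Finset.Ico 1 n, ∑ j ∈ Finset.Ico 1 i, f i j
          = ∑ i ∈ Finset.Ico 1 n, ∑ j ∈ Finset.Ico 1 i, f j i :=
        Finset.sum_congr rfl fun i _ => Finset.sum_congr rfl fun j _ => hfsymm i j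
      rw [hs]
      exact (Finset.sum_Ico_Ico_comm' 1 n f).symm
    rw [hswap]; ring
  have hexp : ∑ i ∈ Finset.Ico 1 n, ∑ j ∈ Finset.Ico 1 n, f i j
      = 2 * (((n : ℝ) - 1) * (((n : ℝ) - 2) / 2)) - 2 * (-1 : ℝ) ^ 2 := by
    have hcard : ((n - 1 : ℕ) : ℝ) = (n : ℝ) - 1 := by
      push_cast [Nat.cast_sub (by omega : 1 ≤ n)]; ring
    have inner : ∀ i, ∑ j ∈ Finset.Ico 1 n, f i j
        = ((n : ℝ) - 1) * (x i) ^ 2 + 2 * x i + ((n : ℝ) - 2) / 2 := by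
      intro i
      have heq : ∀ j, f i j = (x i) ^ 2 - 2 * x i * x j + (x j) ^ 2 := by
        intro j; rw [hf]; ring
      simp_rw [heq]
      rw [Finset.sum_add_distrib, Finset.sum_sub_distrib, Finset.sum_const,
        ← Finset.mul_sum, h1, h2, Nat.card_Ico, nsmul_eq_mul, hcard]
      ring
    rw [Finset.sum_congr rfl (fun i _ => inner i)]
    rw [Finset.sum_add_distrib, Finset.sum_add_distrib, Finset.sum_const,
      ← Finset.mul_sum, ← Finset.mul_sum, h1, h2, Nat.card_Ico, nsmul_eq_mul, hcard]
    ring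
  have : (2 : ℝ) * ∑ i ∈ Finset.Ico 1 n, ∑ j ∈ Finset.Ico (i + 1) n, f i j
      = 2 * (((n : ℝ) - 1) * (((n : ℝ) - 2) / 2)) - 2 * (-1 : ℝ) ^ 2 := by
    rw [← hfull, hexp]
  have hgoal : ∑ i ∈ Finset.Ico 1 n, ∑ j ∈ Finset.Ico (i + 1) n, f i j
      = (n : ℝ) * ((n : ℝ) - 3) / 2 := by linarith
  exact hgoal
end

section
/- For every integer n ≥ 8, the complete symmetric sum Σ over 1 ≤ i₁ ≤ i₂ ≤ ... ≤ i₆ ≤ n-1 of Π_{ν=1}^{6} cos(2πi_ν/n) equals n(n+4)(n+5)/384. -/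
open Real Finset

noncomputable def completeSym (s : Finset ℕ) (r : ℕ) (f : ℕ → ℝ) : ℝ :=
  ∑ m ∈ s.sym r, (Multiset.map f (Sym.toMultiset m)).prod

def msets (s : Finset ℕ) (r : ℕ) : Finset (Multiset ℕ) :=
  (s.sym r).map ⟨Sym.toMultiset, fun a b h => Sym.coe_injective h⟩

lemma mem_msets {s : Finset ℕ} {r : ℕ} {m : Multiset ℕ} :
    m ∈ msets s r ↔ Multiset.card m = r ∧ ∀ a ∈ m, a ∈ s := by
  simp only [msets, Finset.mem_map, Function.Embedding.coeFn_mk]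
  constructor
  · rintro ⟨x, hx, rfl⟩
    exact ⟨x.2, fun a ha => (Finset.mem_sym_iff.1 hx) a ha⟩
  · rintro ⟨hc, hs⟩
    exact ⟨⟨m, hc⟩, Finset.mem_sym_iff.2 hs, rfl⟩

lemma completeSym_eq (s : Finset ℕ) (r : ℕ) (f : ℕ → ℝ) :
    completeSym s r f = ∑ m ∈ msets s r, (m.map f).prod := by
  rw [msets, Finset.sum_map]
  rfl

lemma completeSym_zero (s : Finset ℕ) (f : ℕ → ℝ) : completeSym s 0 f = 1 := by
  simp [completeSym, Finset.sym_zero]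
  rfl

lemma newton (s : Finset ℕ) (f : ℕ → ℝ) (r : ℕ) (hr : 1 ≤ r) :
    (r : ℝ) * completeSym s r f
      = ∑ j ∈ Finset.Icc 1 r, (∑ k ∈ s, f k ^ j) * completeSym s (r - j) f := by
  simp_rw [completeSym_eq]
  have key : ∀ m ∈ msets s r,
      ((Finset.Icc 1 r ×ˢ s).filter (fun p => p.1 ≤ m.count p.2)).card = r := by
    intro m hm
    obtain ⟨hc, hs⟩ := mem_msets.1 hm
    have hsub : m.toFinset ⊆ s := fun a ha => hs a (Multiset.mem_toFinset.1 ha)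
    calc ((Finset.Icc 1 r ×ˢ s).filter (fun p => p.1 ≤ m.count p.2)).card
        = ∑ k ∈ s, ((Finset.Icc 1 r).filter (fun j => j ≤ m.count k)).card := by
          rw [Finset.card_filter, Finset.sum_product, Finset.sum_comm]
          exact Finset.sum_congr rfl fun k _ => (Finset.card_filter _ _).symm
      _ = ∑ k ∈ s, m.count k := by
          refine Finset.sum_congr rfl fun k _ => ?_
          have hcount : m.count k ≤ r := hc ▸ Multiset.count_le_card k m
          have : (Finset.Icc 1 r).filter (fun j => j ≤ m.count k)
              = Finset.Icc 1 (m.count k) := by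
            ext j; simp only [Finset.mem_filter, Finset.mem_Icc]; omega
          rw [this, Nat.card_Icc]
          omega
      _ = ∑ k ∈ m.toFinset, m.count k := by
          refine (Finset.sum_subset hsub fun k _ hk => ?_).symm
          exact Multiset.count_eq_zero_of_notMem (by simpa using hk)
      _ = Multiset.card m := Multiset.toFinset_sum_count_eq m
      _ = r := hc
  have step1 : ∑ j ∈ Finset.Icc 1 r, (∑ k ∈ s, f k ^ j) * ∑ m ∈ msets s (r - j), (m.map f).prod
      = ∑ x ∈ ((Finset.Icc 1 r) ×ˢ s).sigma (fun p => msets s (r - p.1)),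
          f x.1.2 ^ x.1.1 * ((Multiset.map f x.2).prod) := by
    rw [Finset.sum_sigma]
    rw [Finset.sum_product]
    simp_rw [Finset.sum_mul, Finset.mul_sum]
  have step2 : ∑ x ∈ ((Finset.Icc 1 r) ×ˢ s).sigma (fun p => msets s (r - p.1)),
          f x.1.2 ^ x.1.1 * ((Multiset.map f x.2).prod)
      = ∑ y ∈ (msets s r).sigma (fun m => ((Finset.Icc 1 r) ×ˢ s).filter
          (fun p => p.1 ≤ m.count p.2)), ((Multiset.map f y.1).prod) := by
    refine Finset.sum_nbij' (fun x => ⟨x.2 + Multiset.replicate x.1.1 x.1.2, x.1⟩)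
      (fun y => ⟨y.2, y.1 - Multiset.replicate y.2.1 y.2.2⟩) ?_ ?_ ?_ ?_ ?_
    · rintro ⟨⟨j, k⟩, m'⟩ hx
      simp only [Finset.mem_sigma, Finset.mem_product, Finset.mem_Icc, Finset.mem_filter] at hx ⊢
      obtain ⟨⟨⟨hj1, hjr⟩, hk⟩, hm'⟩ := hx
      obtain ⟨hc, hs'⟩ := mem_msets.1 hm'
      refine ⟨mem_msets.2 ⟨?_, ?_⟩, ⟨⟨hj1, hjr⟩, hk⟩, ?_⟩
      · simp [hc]; omega
      · intro a ha
        rcases Multiset.mem_add.1 ha with h | h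
        · exact hs' a h
        · rw [Multiset.eq_of_mem_replicate h]; exact hk
      · simp [Multiset.count_replicate]
    · rintro ⟨m, j, k⟩ hy
      simp only [Finset.mem_sigma, Finset.mem_product, Finset.mem_Icc, Finset.mem_filter] at hy ⊢
      obtain ⟨hm, ⟨⟨hj1, hjr⟩, hk⟩, hcnt⟩ := hy
      obtain ⟨hc, hs'⟩ := mem_msets.1 hm
      have hle : Multiset.replicate j k ≤ m := Multiset.le_iff_count.2 (by
        intro a; rw [Multiset.count_replicate]; split <;> simp_all)
      refine ⟨⟨⟨hj1, hjr⟩, hk⟩, mem_msets.2 ⟨?_, ?_⟩⟩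
      · rw [Multiset.card_sub hle, Multiset.card_replicate, hc]
      · intro a ha
        exact hs' a (Multiset.mem_of_le (tsub_le_self) ha)
    · rintro ⟨⟨j, k⟩, m'⟩ hx
      simp
    · rintro ⟨m, j, k⟩ hy
      simp only [Finset.mem_sigma, Finset.mem_product, Finset.mem_Icc, Finset.mem_filter] at hy
      obtain ⟨hm, ⟨⟨hj1, hjr⟩, hk⟩, hcnt⟩ := hy
      have hle : Multiset.replicate j k ≤ m := Multiset.le_iff_count.2 (by
        intro a; rw [Multiset.count_replicate]; split <;> simp_all)
      simp [tsub_add_cancel_of_le hle]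
    · rintro ⟨⟨j, k⟩, m'⟩ hx
      simp [Multiset.prod_replicate, mul_comm]
  rw [step1, step2, Finset.sum_sigma]
  rw [Finset.mul_sum]
  refine Finset.sum_congr rfl fun m hm => ?_
  have h2 : ∑ _p ∈ (Finset.Icc 1 r ×ˢ s).filter (fun p => p.1 ≤ m.count p.2),
      (Multiset.map f m).prod = (r : ℝ) * (Multiset.map f m).prod := by
    rw [Finset.sum_const, key m hm, nsmul_eq_mul]
  exact h2.symm

lemma cos_sum_eq_neg_one (n t : ℕ) (ht : 1 ≤ t) (htn : t < n) :
    ∑ k ∈ Finset.Icc 1 (n-1), Real.cos (2 * π * t * k / n) = -1 := by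
  have hn0 : (n : ℝ) ≠ 0 := Nat.cast_ne_zero.mpr (by omega)
  have hn0' : (n : ℂ) ≠ 0 := Nat.cast_ne_zero.mpr (by omega)
  set θ : ℝ := 2 * π * t / n with hθ
  set w : ℂ := Complex.exp (θ * Complex.I) with hw
  have hw1 : w ≠ 1 := by
    rw [hw]
    intro h
    rw [Complex.exp_eq_one_iff] at h
    obtain ⟨m, hm⟩ := h
    have hm' : (θ : ℂ) = (m : ℂ) * (2 * π) := by
      have h2 : (θ : ℂ) * Complex.I = ((m : ℂ) * (2 * π)) * Complex.I := by
        rw [hm]; ring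
      exact mul_right_cancel₀ Complex.I_ne_zero h2
    have hre : θ = (m : ℝ) * (2 * π) := by exact_mod_cast hm'
    have htm : (t : ℝ) = (m : ℝ) * n := by
      rw [hθ] at hre
      have hπ : (0:ℝ) < π := Real.pi_pos
      field_simp at hre
      nlinarith [hre]
    have htmz : (t : ℤ) = m * n := by exact_mod_cast htm
    rcases le_or_gt m 0 with hm0 | hm0
    · have : m * (n : ℤ) ≤ 0 := mul_nonpos_of_nonpos_of_nonneg hm0 (by positivity)
      omega
    · have : (n : ℤ) ≤ m * n := le_mul_of_one_le_left (by positivity) hm0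
      omega
  have hwn : w ^ n = 1 := by
    rw [hw, ← Complex.exp_nat_mul]
    have : (n : ℂ) * (θ * Complex.I) = (t : ℂ) * (2 * π * Complex.I) := by
      rw [hθ]
      push_cast
      field_simp
    rw [this]
    exact_mod_cast Complex.exp_int_mul_two_pi_mul_I t
  have hgeom : ∑ k ∈ Finset.range n, w ^ k = 0 := by
    rw [geom_sum_eq hw1, hwn]
    simp
  have hsplit : ∑ k ∈ Finset.Icc 1 (n-1), w ^ k = -1 := by
    have h1 : Finset.range n = insert 0 (Finset.Icc 1 (n-1)) := by
      ext k
      simp only [Finset.mem_range, Finset.mem_insert, Finset.mem_Icc]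
      omega
    rw [h1, Finset.sum_insert (by simp)] at hgeom
    rw [pow_zero] at hgeom
    linear_combination hgeom
  have hre : ∀ k : ℕ, (w ^ k).re = Real.cos (2 * π * t * k / n) := by
    intro k
    rw [hw, ← Complex.exp_nat_mul]
    have : (k : ℂ) * (θ * Complex.I) = ((2 * π * t * k / n : ℝ) : ℂ) * Complex.I := by
      rw [hθ]; push_cast; ring
    rw [this, Complex.exp_ofReal_mul_I_re]
  calc ∑ k ∈ Finset.Icc 1 (n-1), Real.cos (2 * π * t * k / n)
      = ∑ k ∈ Finset.Icc 1 (n-1), (w ^ k).re := by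
        exact Finset.sum_congr rfl fun k _ => (hre k).symm
    _ = (∑ k ∈ Finset.Icc 1 (n-1), w ^ k).re := by rw [Complex.re_sum]
    _ = -1 := by rw [hsplit]; simp

lemma cos_pow_two (x : ℝ) : cos x ^ 2 = (1 + cos (2*x))/2 := by
  rw [cos_two_mul]; ring

lemma cos_pow_three (x : ℝ) : cos x ^ 3 = (3 * cos x + cos (3*x))/4 := by
  rw [cos_three_mul]; ring

lemma cos_four_mul (x : ℝ) : cos (4*x) = 8 * cos x ^ 4 - 8 * cos x ^ 2 + 1 := by
  rw [show (4:ℝ)*x = 2*(2*x) by ring, cos_two_mul, cos_two_mul]; ring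

lemma cos_pow_four (x : ℝ) : cos x ^ 4 = (3 + 4 * cos (2*x) + cos (4*x))/8 := by
  rw [cos_four_mul, cos_two_mul]; ring

lemma cos_five_mul (x : ℝ) :
    cos (5*x) = 16 * cos x ^ 5 - 20 * cos x ^ 3 + 5 * cos x := by
  rw [show (5:ℝ)*x = 2*x + 3*x by ring, cos_add, cos_two_mul, cos_three_mul,
    sin_two_mul, sin_three_mul]
  have h : sin x ^ 2 = 1 - cos x ^ 2 := sin_sq x
  linear_combination (8*cos x*sin x^2 + 2*cos x - 8*cos x^3) * h

lemma cos_pow_five (x : ℝ) :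
    cos x ^ 5 = (10 * cos x + 5 * cos (3*x) + cos (5*x))/16 := by
  rw [cos_five_mul, cos_three_mul]; ring

lemma cos_six_mul (x : ℝ) :
    cos (6*x) = 32 * cos x ^ 6 - 48 * cos x ^ 4 + 18 * cos x ^ 2 - 1 := by
  rw [show (6:ℝ)*x = 2*(3*x) by ring, cos_two_mul, cos_three_mul]; ring

lemma cos_pow_six (x : ℝ) :
    cos x ^ 6 = (10 + 15 * cos (2*x) + 6 * cos (4*x) + cos (6*x))/32 := by
  rw [cos_six_mul, cos_four_mul, cos_two_mul]; ring

lemma sum_cos_mul (n : ℕ) (t : ℕ) (ht : 1 ≤ t) (htn : t < n) :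
    ∑ k ∈ Finset.Icc 1 (n-1), Real.cos ((t:ℝ) * (2*π*k/n)) = -1 := by
  rw [← cos_sum_eq_neg_one n t ht htn]
  refine Finset.sum_congr rfl fun k _ => ?_
  congr 1
  ring

lemma sum_const_cast (n : ℕ) (hn : 1 ≤ n) (c : ℝ) :
    ∑ _k ∈ Finset.Icc 1 (n-1), c = c * ((n:ℝ) - 1) := by
  rw [Finset.sum_const, Nat.card_Icc]
  have h1 : n - 1 + 1 - 1 = n - 1 := by omega
  rw [h1, nsmul_eq_mul]
  have h2 : ((n - 1 : ℕ) : ℝ) = (n:ℝ) - 1 := by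
    push_cast [hn]; ring
  rw [h2, mul_comm]

theorem h6_at_cosine_points (n : ℕ) (hn : 8 ≤ n) :
    completeSym (Finset.Icc 1 (n - 1)) 6 (fun k => Real.cos (2 * π * k / n))
    = n * (n + 4) * (n + 5) / 384 := by
  have hn1 : 1 ≤ n := by omega
  set N : ℝ := (n : ℝ) with hN
  set s : Finset ℕ := Finset.Icc 1 (n - 1) with hs
  set f : ℕ → ℝ := fun k => Real.cos (2 * π * k / n) with hf
  -- sums of cos (t * θ k)
  have hC : ∀ t : ℕ, 1 ≤ t → t < n →
      ∑ k ∈ s, Real.cos ((t:ℝ) * (2*π*k/n)) = -1 := fun t ht htn =>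
    sum_cos_mul n t ht htn
  have hC1 : ∑ k ∈ s, Real.cos (2*π*k/n) = -1 := by
    have := hC 1 (by omega) (by omega); simpa using this
  have hC2 : ∑ k ∈ s, Real.cos (2*(2*π*k/n)) = -1 := by
    have := hC 2 (by omega) (by omega); push_cast at this; simpa using this
  have hC3 : ∑ k ∈ s, Real.cos (3*(2*π*k/n)) = -1 := by
    have := hC 3 (by omega) (by omega); push_cast at this; simpa using this
  have hC4 : ∑ k ∈ s, Real.cos (4*(2*π*k/n)) = -1 := by
    have := hC 4 (by omega) (by omega); push_cast at this; simpa using this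
  have hC5 : ∑ k ∈ s, Real.cos (5*(2*π*k/n)) = -1 := by
    have := hC 5 (by omega) (by omega); push_cast at this; simpa using this
  have hC6 : ∑ k ∈ s, Real.cos (6*(2*π*k/n)) = -1 := by
    have := hC 6 (by omega) (by omega); push_cast at this; simpa using this
  -- power sums
  have hp1 : ∑ k ∈ s, f k ^ 1 = -1 := by
    simp only [hf, pow_one]; exact hC1
  have hp2 : ∑ k ∈ s, f k ^ 2 = (N - 2) / 2 := by
    simp only [hf]
    have e : ∀ k : ℕ, Real.cos (2*π*k/n) ^ 2
        = 1/2 + Real.cos (2*(2*π*k/n)) * (1/2) := by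
      intro k; rw [cos_pow_two]; ring
    simp_rw [e]
    rw [Finset.sum_add_distrib, ← Finset.sum_mul, hC2, sum_const_cast n hn1]
    ring
  have hp3 : ∑ k ∈ s, f k ^ 3 = -1 := by
    simp only [hf]
    have e : ∀ k : ℕ, Real.cos (2*π*k/n) ^ 3
        = Real.cos (2*π*k/n) * (3/4) + Real.cos (3*(2*π*k/n)) * (1/4) := by
      intro k; rw [cos_pow_three]; ring
    simp_rw [e]
    rw [Finset.sum_add_distrib, ← Finset.sum_mul, ← Finset.sum_mul, hC1, hC3]
    ring
  have hp4 : ∑ k ∈ s, f k ^ 4 = (3*N - 8) / 8 := by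
    simp only [hf]
    have e : ∀ k : ℕ, Real.cos (2*π*k/n) ^ 4
        = 3/8 + (Real.cos (2*(2*π*k/n)) * (1/2)
          + Real.cos (4*(2*π*k/n)) * (1/8)) := by
      intro k; rw [cos_pow_four]; ring
    simp_rw [e]
    rw [Finset.sum_add_distrib, Finset.sum_add_distrib, ← Finset.sum_mul,
      ← Finset.sum_mul, hC2, hC4, sum_const_cast n hn1]
    ring
  have hp5 : ∑ k ∈ s, f k ^ 5 = -1 := by
    simp only [hf]
    have e : ∀ k : ℕ, Real.cos (2*π*k/n) ^ 5
        = Real.cos (2*π*k/n) * (10/16) + (Real.cos (3*(2*π*k/n)) * (5/16)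
          + Real.cos (5*(2*π*k/n)) * (1/16)) := by
      intro k; rw [cos_pow_five]; ring
    simp_rw [e]
    rw [Finset.sum_add_distrib, Finset.sum_add_distrib, ← Finset.sum_mul,
      ← Finset.sum_mul, ← Finset.sum_mul, hC1, hC3, hC5]
    ring
  have hp6 : ∑ k ∈ s, f k ^ 6 = (5*N - 16) / 16 := by
    simp only [hf]
    have e : ∀ k : ℕ, Real.cos (2*π*k/n) ^ 6
        = 10/32 + (Real.cos (2*(2*π*k/n)) * (15/32)
          + (Real.cos (4*(2*π*k/n)) * (6/32)
          + Real.cos (6*(2*π*k/n)) * (1/32))) := by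
      intro k; rw [cos_pow_six]; ring
    simp_rw [e]
    rw [Finset.sum_add_distrib, Finset.sum_add_distrib, Finset.sum_add_distrib,
      ← Finset.sum_mul, ← Finset.sum_mul, ← Finset.sum_mul, hC2, hC4, hC6,
      sum_const_cast n hn1]
    ring
  -- Newton recursion
  have h0 : completeSym s 0 f = 1 := completeSym_zero s f
  have icc1 : Finset.Icc 1 1 = ({1} : Finset ℕ) := rfl
  have icc2 : Finset.Icc 1 2 = ({1, 2} : Finset ℕ) := rfl
  have icc3 : Finset.Icc 1 3 = ({1, 2, 3} : Finset ℕ) := rfl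
  have icc4 : Finset.Icc 1 4 = ({1, 2, 3, 4} : Finset ℕ) := rfl
  have icc5 : Finset.Icc 1 5 = ({1, 2, 3, 4, 5} : Finset ℕ) := rfl
  have icc6 : Finset.Icc 1 6 = ({1, 2, 3, 4, 5, 6} : Finset ℕ) := rfl
  have e1 := newton s f 1 (by omega)
  have e2 := newton s f 2 (by omega)
  have e3 := newton s f 3 (by omega)
  have e4 := newton s f 4 (by omega)
  have e5 := newton s f 5 (by omega)
  have e6 := newton s f 6 (by omega)
  rw [icc1] at e1
  rw [icc2] at e2
  rw [icc3] at e3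
  rw [icc4] at e4
  rw [icc5] at e5
  rw [icc6] at e6
  simp only [Finset.sum_insert, Finset.mem_insert, Finset.mem_singleton,
    Finset.sum_singleton] at e1 e2 e3 e4 e5 e6
  have hp1' : ∑ x ∈ s, f x = -1 := by simpa using hp1
  norm_num [hp1', hp1, hp2, hp3, hp4, hp5, hp6, h0] at e1 e2 e3 e4 e5 e6
  have hH1 : completeSym s 1 f = -1 := by linarith
  rw [hH1] at e2 e3 e4 e5 e6
  have hH2 : completeSym s 2 f = N / 4 := by linarith
  rw [hH2] at e3 e4 e5 e6
  have hH3 : completeSym s 3 f = -N / 4 := by linarith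
  rw [hH3] at e4 e5 e6
  have hH4 : completeSym s 4 f = N * (N + 3) / 32 := by linarith
  rw [hH4] at e5 e6
  have hH5 : completeSym s 5 f = -(N * (N + 3)) / 32 := by linarith
  rw [hH5] at e6
  have : completeSym s 6 f = N * (N + 4) * (N + 5) / 384 := by linarith
  rw [this, hN]
end
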